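/- Let G = 2 and suppose the design matrix X ∈ ℝ^{n×p} satisfies (1/n)XᵀX = I_p (i.e., X/√n is orthogonal). For j = 1,…,p let r_j = (1/n)⟨y, x^j⟩, where x^j is the j-th column of X. Let α ∈ [0,1] and λ_s, λ_d ≥ 0, and let (β̂¹, β̂²) be any global minimizer of the SplitReg objective. If |r_j| ≤ α λ_s, then β̂¹_j = 0 and β̂²_j = 0. -/

import Mathlib

open Finset

/-- The soft-thresholding operator: `soft z γ = sign(z) * max 0 (|z| - γ)`. -/
noncomputable def soft (z γ : ℝ) : ℝ := Real.sign z * max 0 (|z| - γ)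

/-- The SplitReg objective function for data `y`, design matrix `X`,
elastic net mixing parameter `α`, sparsity penalty `lam_s`, diversity penalty `lam_d`,
and coefficient matrix `β` (one column `β g` per group). -/
noncomputable def splitRegObj {n p G : ℕ} (y : Fin n → ℝ) (X : Matrix (Fin n) (Fin p) ℝ)
    (α lam_s lam_d : ℝ) (β : Fin G → Fin p → ℝ) : ℝ :=
  ∑ g : Fin G,
    ((1 / (2 * (n : ℝ))) * ∑ i, (y i - ∑ j, X i j * β g j) ^ 2
      + lam_s * ((1 - α) / 2 * ∑ j, (β g j) ^ 2 + α * ∑ j, |β g j|)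
      + lam_d / 2 * ∑ h ∈ Finset.univ.erase g, ∑ j, |β g j| * |β h j|)

lemma sum_apply_update {p : ℕ} (v : Fin p → ℝ) (j : Fin p) (a : ℝ) (f : Fin p → ℝ → ℝ) :
    ∑ k, f k (Function.update v j a k) = (∑ k, f k (v k)) + (f j a - f j (v j)) := by
  have h1 : (fun k => f k (Function.update v j a k))
      = Function.update (fun k => f k (v k)) j (f j a) := by
    funext k
    by_cases hk : k = j
    · subst hk; simp
    · simp [Function.update_of_ne hk]
  calc ∑ k, f k (Function.update v j a k)
      = ∑ k, Function.update (fun k => f k (v k)) j (f j a) k := by rw [h1]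
    _ = f j a + ∑ k ∈ Finset.univ \ {j}, f k (v k) :=
        Finset.sum_update_of_mem (Finset.mem_univ j) _ _
    _ = (∑ k, f k (v k)) + (f j a - f j (v j)) := by
        rw [← Finset.erase_eq, ← Finset.add_sum_erase _ _ (Finset.mem_univ j)]; ring

lemma splitreg_key
    {n p : ℕ} (hn : 0 < n) (y : Fin n → ℝ) (X : Matrix (Fin n) (Fin p) ℝ)
    (α lam_s lam_d : ℝ) (hα : α ∈ Set.Icc (0 : ℝ) 1) (hs : 0 ≤ lam_s) (hd : 0 ≤ lam_d)
    (horth : ∀ j k : Fin p, (1 / (n : ℝ)) * ∑ i, X i j * X i k = if j = k then 1 else 0)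
    (βhat : Fin 2 → Fin p → ℝ)
    (hmin : ∀ b : Fin 2 → Fin p → ℝ,
      splitRegObj y X α lam_s lam_d βhat ≤ splitRegObj y X α lam_s lam_d b)
    (j : Fin p)
    (hr : |(1 / (n : ℝ)) * ∑ i, y i * X i j| ≤ α * lam_s)
    (g h : Fin 2) (hgh : h ≠ g) :
    βhat g j = 0 := by
  have hn' : (n : ℝ) ≠ 0 := Nat.cast_ne_zero.mpr hn.ne'
  set t := βhat g j with ht
  set r := (1 / (n : ℝ)) * ∑ i, y i * X i j with hrdef
  set b := Function.update βhat g (Function.update (βhat g) j 0) with hb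
  have hbg : b g = Function.update (βhat g) j 0 := Function.update_self _ _ _
  have hbh : b h = βhat h := Function.update_of_ne hgh _ _
  -- componentwise computations
  have hA : ∑ k, (b g k) ^ 2 = (∑ k, (βhat g k) ^ 2) - t ^ 2 := by
    rw [hbg]
    have := sum_apply_update (βhat g) j 0 (fun _ x => x ^ 2)
    rw [this]; ring
  have hB : ∑ k, |b g k| = (∑ k, |βhat g k|) - |t| := by
    rw [hbg]
    have := sum_apply_update (βhat g) j 0 (fun _ x => |x|)
    rw [this]; simp; ring
  have hC : ∑ k, |b g k| * |βhat h k|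
      = (∑ k, |βhat g k| * |βhat h k|) - |t| * |βhat h j| := by
    rw [hbg]
    have := sum_apply_update (βhat g) j 0 (fun k x => |x| * |βhat h k|)
    rw [this, ht]; simp only [abs_zero, zero_mul, mul_zero]; ring
  have hC' : ∑ k, |βhat h k| * |b g k|
      = (∑ k, |βhat h k| * |βhat g k|) - |βhat h j| * |t| := by
    rw [hbg]
    have := sum_apply_update (βhat g) j 0 (fun k x => |βhat h k| * |x|)
    rw [this, ht]; simp only [abs_zero, zero_mul, mul_zero]; ring
  have hres : ∀ i, ∑ k, X i k * b g k = (∑ k, X i k * βhat g k) - X i j * t := by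
    intro i
    rw [hbg]
    have := sum_apply_update (βhat g) j 0 (fun k x => X i k * x)
    rw [this]; ring
  have hXX : ∀ k, ∑ i, X i k * X i j = if k = j then (n : ℝ) else 0 := by
    intro k
    have h1 := horth k j
    have h2 : ∑ i, X i k * X i j = (n : ℝ) * ((1 / (n : ℝ)) * ∑ i, X i k * X i j) := by
      field_simp
    rw [h2, h1]
    split <;> simp
  have hXj : ∑ i, (X i j) ^ 2 = (n : ℝ) := by
    have h1 := hXX j
    simp only [if_pos rfl] at h1
    calc ∑ i, (X i j) ^ 2 = ∑ i, X i j * X i j := by simp [sq]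
      _ = (n : ℝ) := h1
  have hyX : ∑ i, y i * X i j = (n : ℝ) * r := by
    rw [hrdef]; field_simp
  have hresX : ∑ i, (y i - ∑ k, X i k * βhat g k) * X i j
      = (n : ℝ) * r - (n : ℝ) * t := by
    have hswap : ∑ i, (∑ k, X i k * βhat g k) * X i j
        = ∑ k, βhat g k * ∑ i, X i k * X i j := by
      simp_rw [Finset.sum_mul, Finset.mul_sum]
      rw [Finset.sum_comm]
      apply Finset.sum_congr rfl; intro i _
      apply Finset.sum_congr rfl; intro k _
      ring
    have h2 : ∑ k, βhat g k * ∑ i, X i k * X i j = (n : ℝ) * t := by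
      simp only [hXX, mul_ite, mul_zero]
      rw [Finset.sum_ite_eq' Finset.univ j (fun k => βhat g k * (n : ℝ))]
      simp [ht, mul_comm]
    simp_rw [sub_mul, Finset.sum_sub_distrib]
    rw [hyX, hswap, h2]
  have hL : ∑ i, (y i - ∑ k, X i k * b g k) ^ 2
      = (∑ i, (y i - ∑ k, X i k * βhat g k) ^ 2)
        + 2 * t * ((n : ℝ) * r - (n : ℝ) * t) + t ^ 2 * (n : ℝ) := by
    have hpt : ∀ i, (y i - ∑ k, X i k * b g k) ^ 2
        = (y i - ∑ k, X i k * βhat g k) ^ 2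
          + 2 * t * ((y i - ∑ k, X i k * βhat g k) * X i j)
          + t ^ 2 * (X i j) ^ 2 := by
      intro i; rw [hres i]; ring
    simp_rw [hpt, Finset.sum_add_distrib, ← Finset.mul_sum]
    rw [hresX, hXj]
  -- set-up of the two-group sums
  have hne : g ≠ h := fun e => hgh e.symm
  have hgs : g ∉ ({h} : Finset (Fin 2)) := by simp [hne]
  have huniv : (Finset.univ : Finset (Fin 2)) = {g, h} := by
    symm; apply Finset.eq_univ_iff_forall.mpr
    intro x
    simp only [Finset.mem_insert, Finset.mem_singleton]
    omega
  have he1 : ({g, h} : Finset (Fin 2)).erase g = {h} := by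
    rw [Finset.erase_insert hgs]
  have he2 : ({g, h} : Finset (Fin 2)).erase h = {g} := by
    ext x
    simp only [Finset.mem_erase, Finset.mem_insert, Finset.mem_singleton]
    constructor
    · rintro ⟨hx, hx2 | hx2⟩ <;> tauto
    · intro hx; subst hx; exact ⟨hne, Or.inl rfl⟩
  have hobj : splitRegObj y X α lam_s lam_d b
      = splitRegObj y X α lam_s lam_d βhat
        + ((t * r - t ^ 2 / 2) - lam_s * ((1 - α) / 2 * t ^ 2 + α * |t|)
            - lam_d * (|t| * |βhat h j|)) := by
    rw [splitRegObj, splitRegObj, huniv,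
      Finset.sum_insert hgs, Finset.sum_singleton,
      Finset.sum_insert hgs, Finset.sum_singleton,
      he1, he2, Finset.sum_singleton, Finset.sum_singleton,
      Finset.sum_singleton, Finset.sum_singleton]
    rw [hbh, hA, hB, hC, hC', hL]
    field_simp
    ring
  have hineq := hmin b
  rw [hobj] at hineq
  have habs : t * r ≤ |t| * (α * lam_s) := by
    calc t * r ≤ |t * r| := le_abs_self _
      _ = |t| * |r| := abs_mul t r
      _ ≤ |t| * (α * lam_s) := mul_le_mul_of_nonneg_left hr (abs_nonneg t)
  have h1 : 0 ≤ lam_s * ((1 - α) / 2 * t ^ 2) := by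
    apply mul_nonneg hs
    apply mul_nonneg
    · linarith [hα.2]
    · positivity
  have h2 : 0 ≤ lam_d * (|t| * |βhat h j|) := by positivity
  have h3 : 0 ≤ lam_s * (α * |t|) := by
    apply mul_nonneg hs (mul_nonneg hα.1 (abs_nonneg _))
  have ht2 : t ^ 2 ≤ 0 := by nlinarith
  have : t ^ 2 = 0 := le_antisymm ht2 (sq_nonneg t)
  exact pow_eq_zero_iff (two_ne_zero) |>.mp this

/-- **Proposition 1, part 1 (orthogonal design, `G = 2`).**
If `(1/n)XᵀX = I` and `|r_j| ≤ α λ_s`, where `r_j = (1/n)⟨y, x^j⟩`, then the `j`-th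
coefficient of both models of any global minimizer of the SplitReg objective is zero. -/
theorem splitreg_orthogonal_zero
    {n p : ℕ} (hn : 0 < n) (y : Fin n → ℝ) (X : Matrix (Fin n) (Fin p) ℝ)
    (α lam_s lam_d : ℝ) (hα : α ∈ Set.Icc (0 : ℝ) 1) (hs : 0 ≤ lam_s) (hd : 0 ≤ lam_d)
    (horth : ∀ j k : Fin p, (1 / (n : ℝ)) * ∑ i, X i j * X i k = if j = k then 1 else 0)
    (βhat : Fin 2 → Fin p → ℝ)
    (hmin : ∀ b : Fin 2 → Fin p → ℝ,
      splitRegObj y X α lam_s lam_d βhat ≤ splitRegObj y X α lam_s lam_d b)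
    (j : Fin p)
    (hr : |(1 / (n : ℝ)) * ∑ i, y i * X i j| ≤ α * lam_s) :
    βhat 0 j = 0 ∧ βhat 1 j = 0 := by
  exact ⟨splitreg_key hn y X α lam_s lam_d hα hs hd horth βhat hmin j hr 0 1 (by decide),
    splitreg_key hn y X α lam_s lam_d hα hs hd horth βhat hmin j hr 1 0 (by decide)⟩
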